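/- arXiv:2309.14501 — 2 statements merged into one kernel-verified Lean document; each statement's English description precedes it below -/
import Mathlib

section
/- Let n = ab where a and b are positive integers with gcd(a, b) = 1. Then for every non-negative integer k, z^k(n) = lcm( z^k(a), z^k(b) ). -/
/-- The order of appearance of `n` in the Fibonacci sequence: the smallest
positive integer `ℓ` such that `n` divides the `ℓ`-th Fibonacci number. -/
noncomputable def z (n : ℕ) : ℕ := sInf {ℓ : ℕ | 0 < ℓ ∧ n ∣ Nat.fib ℓ}

lemma exists_fib_dvd (n : ℕ) (hn : 0 < n) : ∃ ℓ, 0 < ℓ ∧ n ∣ Nat.fib ℓ := by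
  haveI : NeZero n := ⟨hn.ne'⟩
  set f : ZMod n × ZMod n → ZMod n × ZMod n := fun p => (p.2, p.1 + p.2) with hf
  have hfinj : Function.Injective f := by
    intro p q h
    simp only [hf, Prod.mk.injEq] at h
    obtain ⟨h1, h2⟩ := h
    have : p.1 = q.1 := by
      have := h2; rw [h1] at this; exact add_right_cancel this
    exact Prod.ext this h1
  have key : ∀ i, f^[i] ((0 : ZMod n), (1 : ZMod n))
      = ((Nat.fib i : ZMod n), (Nat.fib (i+1) : ZMod n)) := by
    intro i
    induction i with
    | zero => simp
    | succ i ih =>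
      rw [Function.iterate_succ_apply', ih]
      simp only [hf, Prod.mk.injEq]
      refine ⟨trivial, ?_⟩
      rw [Nat.fib_add_two]; push_cast; ring
  obtain ⟨i, j, hij, heq⟩ := Finite.exists_ne_map_eq_of_infinite
    (fun i : ℕ => f^[i] ((0 : ZMod n), (1 : ZMod n)))
  -- WLOG i < j
  have main : ∀ i j : ℕ, i < j →
      f^[i] ((0 : ZMod n), (1 : ZMod n)) = f^[j] ((0 : ZMod n), (1 : ZMod n)) →
      ∃ ℓ, 0 < ℓ ∧ n ∣ Nat.fib ℓ := by
    intro i j hlt he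
    obtain ⟨d, rfl⟩ := Nat.exists_eq_add_of_lt hlt
    rw [show i + d + 1 = i + (d+1) by ring, Function.iterate_add_apply] at he
    have := (Function.Injective.iterate hfinj i) he
    refine ⟨d + 1, Nat.succ_pos d, ?_⟩
    rw [← ZMod.natCast_eq_zero_iff]
    have := congrArg Prod.fst ((key (d+1)).symm.trans this.symm)
    simpa using this
  rcases lt_or_gt_of_ne hij with h | h
  · exact main i j h heq
  · exact main j i h heq.symm

lemma z_mem (n : ℕ) (hn : 0 < n) : 0 < z n ∧ n ∣ Nat.fib (z n) :=
  Nat.sInf_mem (exists_fib_dvd n hn)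

lemma z_dvd_iff (n : ℕ) (hn : 0 < n) (ℓ : ℕ) : n ∣ Nat.fib ℓ ↔ z n ∣ ℓ := by
  constructor
  · intro h
    rcases Nat.eq_zero_or_pos ℓ with rfl | hl
    · exact dvd_zero _
    -- gcd trick
    have hg : n ∣ Nat.fib (Nat.gcd (z n) ℓ) := by
      rw [Nat.fib_gcd]
      exact Nat.dvd_gcd (z_mem n hn).2 h
    have hgpos : 0 < Nat.gcd (z n) ℓ := Nat.gcd_pos_of_pos_right _ hl
    have hle : z n ≤ Nat.gcd (z n) ℓ := Nat.sInf_le ⟨hgpos, hg⟩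
    have hge : Nat.gcd (z n) ℓ ≤ z n := Nat.le_of_dvd (z_mem n hn).1 (Nat.gcd_dvd_left _ _)
    have : Nat.gcd (z n) ℓ = z n := le_antisymm hge hle
    rw [← this]; exact Nat.gcd_dvd_right _ _
  · intro h
    exact dvd_trans (z_mem n hn).2 (Nat.fib_dvd _ _ h)

lemma z_pos (n : ℕ) (hn : 0 < n) : 0 < z n := (z_mem n hn).1

lemma z_lcm (m n : ℕ) (hm : 0 < m) (hn : 0 < n) :
    z (Nat.lcm m n) = Nat.lcm (z m) (z n) := by
  have hl : 0 < Nat.lcm m n := Nat.pos_of_ne_zero (Nat.lcm_ne_zero hm.ne' hn.ne')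
  have hset : {ℓ : ℕ | 0 < ℓ ∧ Nat.lcm m n ∣ Nat.fib ℓ}
      = {ℓ : ℕ | 0 < ℓ ∧ Nat.lcm (z m) (z n) ∣ ℓ} := by
    ext ℓ
    simp only [Set.mem_setOf_eq, Nat.lcm_dvd_iff, and_congr_right_iff]
    intro _
    rw [z_dvd_iff m hm, z_dvd_iff n hn]
  have hpos : 0 < Nat.lcm (z m) (z n) :=
    Nat.pos_of_ne_zero (Nat.lcm_ne_zero (z_pos m hm).ne' (z_pos n hn).ne')
  rw [z, hset]
  apply le_antisymm
  · exact Nat.sInf_le ⟨hpos, dvd_refl _⟩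
  · have := Nat.sInf_mem (⟨Nat.lcm (z m) (z n), hpos, dvd_refl _⟩ :
      ∃ ℓ, ℓ ∈ {ℓ : ℕ | 0 < ℓ ∧ Nat.lcm (z m) (z n) ∣ ℓ})
    exact Nat.le_of_dvd this.1 this.2

lemma z_iter_lcm (k m n : ℕ) (hm : 0 < m) (hn : 0 < n) :
    z^[k] (Nat.lcm m n) = Nat.lcm (z^[k] m) (z^[k] n) := by
  induction k generalizing m n with
  | zero => simp
  | succ k ih =>
    rw [Function.iterate_succ_apply, Function.iterate_succ_apply,
      Function.iterate_succ_apply, z_lcm m n hm hn,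
      ih (z m) (z n) (z_pos m hm) (z_pos n hn)]

theorem z_iter_coprime_mul (a b : ℕ) (ha : 0 < a) (hb : 0 < b)
    (hab : Nat.gcd a b = 1) (k : ℕ) :
    z^[k] (a * b) = Nat.lcm (z^[k] a) (z^[k] b) := by
  have : a * b = Nat.lcm a b := (Nat.Coprime.lcm_eq_mul hab).symm
  rw [this, z_iter_lcm k a b ha hb]
end

section
/- For every positive integer a and every non-negative integer b, there exists a non-negative integer k such that z^k(2^a·5^b) = 12·5^b. -/
lemma fib_mod_period {p T : ℕ} (hT : 0 < T) (h0 : Nat.fib (T-1) % p = 1 % p)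
    (h1 : Nat.fib T % p = 0) : ∀ ℓ, Nat.fib ℓ % p = Nat.fib (ℓ % T) % p := by
  intro ℓ
  induction ℓ using Nat.strong_induction_on with
  | _ ℓ ih =>
    rcases lt_or_ge ℓ T with h | h
    · rw [Nat.mod_eq_of_lt h]
    · have e : ℓ = (T - 1) + (ℓ - T) + 1 := by omega
      have e2 : (T - 1) + 1 = T := by omega
      have key : Nat.fib ℓ % p = Nat.fib (ℓ - T) % p := by
        calc Nat.fib ℓ % p = Nat.fib ((T - 1) + (ℓ - T) + 1) % p := by rw [← e]
          _ = (Nat.fib (T-1) * Nat.fib (ℓ-T) + Nat.fib T * Nat.fib (ℓ-T+1)) % p := by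
              rw [Nat.fib_add, e2]
          _ = Nat.fib (ℓ - T) % p := by
              have m0 : Nat.fib (T-1) * Nat.fib (ℓ-T) ≡ 1 * Nat.fib (ℓ-T) [MOD p] :=
                Nat.ModEq.mul_right _ h0
              have m1 : Nat.fib T * Nat.fib (ℓ-T+1) ≡ 0 * Nat.fib (ℓ-T+1) [MOD p] :=
                Nat.ModEq.mul_right _ (by simpa [Nat.ModEq] using h1)
              simpa [Nat.ModEq] using (m0.add m1)
      rw [key, ih (ℓ - T) (by omega), Nat.mod_eq_sub_mod h]

lemma two_dvd_fib (ℓ : ℕ) : 2 ∣ Nat.fib ℓ ↔ 3 ∣ ℓ := by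
  have h := fib_mod_period (p := 2) (T := 3) (by norm_num) (by decide) (by decide) ℓ
  have hr : ℓ % 3 < 3 := Nat.mod_lt _ (by norm_num)
  have hd : ∀ r < 3, (Nat.fib r % 2 = 0 ↔ r = 0) := by decide
  have := hd (ℓ % 3) hr
  omega

lemma four_dvd_fib (ℓ : ℕ) : 4 ∣ Nat.fib ℓ ↔ 6 ∣ ℓ := by
  have h := fib_mod_period (p := 4) (T := 6) (by norm_num) (by decide) (by decide) ℓ
  have hr : ℓ % 6 < 6 := Nat.mod_lt _ (by norm_num)
  have hd : ∀ r < 6, (Nat.fib r % 4 = 0 ↔ r = 0) := by decide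
  have := hd (ℓ % 6) hr
  omega

lemma three_dvd_fib (ℓ : ℕ) : 3 ∣ Nat.fib ℓ ↔ 4 ∣ ℓ := by
  have h := fib_mod_period (p := 3) (T := 8) (by norm_num) (by decide) (by decide) ℓ
  have hr : ℓ % 8 < 8 := Nat.mod_lt _ (by norm_num)
  have hd : ∀ r < 8, (Nat.fib r % 3 = 0 ↔ (r = 0 ∨ r = 4)) := by decide
  have := hd (ℓ % 8) hr
  omega

lemma five_dvd_fib (ℓ : ℕ) : 5 ∣ Nat.fib ℓ ↔ 5 ∣ ℓ := by
  have h := fib_mod_period (p := 5) (T := 20) (by norm_num) (by decide) (by decide) ℓ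
  have hr : ℓ % 20 < 20 := Nat.mod_lt _ (by norm_num)
  have hd : ∀ r < 20, (Nat.fib r % 5 = 0 ↔ (r = 0 ∨ r = 5 ∨ r = 10 ∨ r = 15)) := by decide
  have := hd (ℓ % 20) hr
  omega

lemma sixteen_dvd_fib (ℓ : ℕ) : 16 ∣ Nat.fib ℓ ↔ 12 ∣ ℓ := by
  have h := fib_mod_period (p := 16) (T := 24) (by norm_num) (by decide) (by decide) ℓ
  have hr : ℓ % 24 < 24 := Nat.mod_lt _ (by norm_num)
  have hd : ∀ r < 24, (Nat.fib r % 16 = 0 ↔ (r = 0 ∨ r = 12)) := by decide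
  have := hd (ℓ % 24) hr
  omega

lemma eight_dvd_fib (ℓ : ℕ) : 8 ∣ Nat.fib ℓ ↔ 6 ∣ ℓ := by
  constructor
  · intro h
    exact (four_dvd_fib ℓ).mp (dvd_trans (by norm_num) h)
  · intro h
    have := Nat.fib_dvd 6 ℓ h
    have h8 : (8:ℕ) = Nat.fib 6 := by decide
    rw [h8]; exact this


lemma pow2_dvd_fib : ∀ e, 2 ≤ e → ∀ ℓ, (2^(e+2) ∣ Nat.fib ℓ ↔ 3 * 2^e ∣ ℓ) := by
  intro e he
  induction e, he using Nat.le_induction with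
  | base =>
    intro ℓ
    norm_num
    exact sixteen_dvd_fib ℓ
  | succ e he ih =>
    intro ℓ
    constructor
    · intro h
      have h16 : 16 ∣ Nat.fib ℓ := by
        refine dvd_trans ?_ h
        have : (2:ℕ)^4 ∣ 2^(e+1+2) := pow_dvd_pow 2 (by omega)
        simpa using this
      have h12 : 12 ∣ ℓ := (sixteen_dvd_fib ℓ).mp h16
      set n := ℓ / 2 with hn
      have hln : ℓ = 2 * n := by omega
      have h6n : 6 ∣ n := by omega
      have hf2 : 2 ∣ Nat.fib n := (two_dvd_fib n).mpr (by omega)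
      have hf4 : 4 ∣ Nat.fib n := (four_dvd_fib n).mpr h6n
      have hodd : ¬ 2 ∣ Nat.fib (n+1) := by rw [two_dvd_fib]; omega
      have hle : Nat.fib n ≤ 2 * Nat.fib (n+1) := by
        have := Nat.fib_le_fib_succ (n := n); omega
      set t := 2 * Nat.fib (n+1) - Nat.fib n with hts
      have htt : t + Nat.fib n = 2 * Nat.fib (n+1) := by omega
      obtain ⟨s, hseq, hsodd⟩ : ∃ s, t = 2 * s ∧ ¬ 2 ∣ s := ⟨t/2, by omega, by omega⟩
      have hfibl : Nat.fib ℓ = Nat.fib n * t := by rw [hln, Nat.fib_two_mul]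
      have hh : 2 * 2^(e+2) ∣ 2 * (Nat.fib n * s) := by
        have heq : Nat.fib ℓ = 2 * (Nat.fib n * s) := by rw [hfibl, hseq]; ring
        rw [← heq, show 2 * 2^(e+2) = 2^(e+1+2) by ring]
        exact h
      have hcanc : 2^(e+2) ∣ Nat.fib n * s :=
        (Nat.mul_dvd_mul_iff_left (by norm_num : 0 < 2)).mp hh
      have hcop : Nat.Coprime (2^(e+2)) s :=
        Nat.Coprime.pow_left _ ((Nat.prime_two.coprime_iff_not_dvd).mpr hsodd)
      have hfn : 2^(e+2) ∣ Nat.fib n := (Nat.Coprime.dvd_of_dvd_mul_right hcop) hcanc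
      have : 3 * 2^e ∣ n := (ih n).mp hfn
      rw [hln, show 3 * 2^(e+1) = 2 * (3 * 2^e) by ring]
      exact mul_dvd_mul_left 2 this
    · intro h
      have hstep : 2^(e+1+2) ∣ Nat.fib (2 * (3 * 2^e)) := by
        have hfn : 2^(e+2) ∣ Nat.fib (3 * 2^e) := (ih _).mpr dvd_rfl
        have hf2 : 2 ∣ Nat.fib (3 * 2^e) := dvd_trans (by
          exact dvd_pow_self 2 (by omega) |>.trans (dvd_refl _)) hfn
        rw [Nat.fib_two_mul]
        have h2r : 2 ∣ (2 * Nat.fib (3*2^e + 1) - Nat.fib (3*2^e)) := by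
          obtain ⟨u, hu⟩ := hf2
          have hle : Nat.fib (3*2^e) ≤ 2 * Nat.fib (3*2^e+1) := by
            have := Nat.fib_le_fib_succ (n := 3*2^e); omega
          omega
        rw [show (2:ℕ)^(e+1+2) = 2^(e+2) * 2 by ring]
        exact mul_dvd_mul hfn h2r
      exact dvd_trans hstep (Nat.fib_dvd _ _ (by
        rw [show 2 * (3 * 2^e) = 3 * 2^(e+1) by ring]; exact h))


lemma cassini (n : ℕ) :
    (Nat.fib (n+1) : ℤ)^2 - Nat.fib (n+1) * Nat.fib n - (Nat.fib n : ℤ)^2 = (-1)^n := by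
  induction n with
  | zero => simp
  | succ n ih =>
    rw [show n+1+1 = n+2 by ring, Nat.fib_add_two]
    push_cast
    linear_combination -ih

lemma fib_five_mul (n : ℕ) (hn : 1 ≤ n) :
    (Nat.fib (5*n) : ℤ) = 5 * Nat.fib n *
      (5 * (Nat.fib n : ℤ)^4 + 5 * (-1)^n * (Nat.fib n : ℤ)^2 + 1) := by
  set x : ℤ := (Nat.fib n : ℤ) with hx
  set y : ℤ := (Nat.fib (n+1) : ℤ) with hy
  have hpred : (Nat.fib (n-1) : ℤ) = y - x := by
    have h := Nat.fib_add_two (n := n - 1)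
    rw [show n-1+2 = n+1 by omega, show n-1+1 = n by omega] at h
    rw [hy, h]; push_cast; ring
  have hstep : ∀ m : ℕ, (Nat.fib (m + n) : ℤ) =
      Nat.fib m * (y - x) + Nat.fib (m+1) * x := by
    intro m
    rw [show m + n = m + (n-1) + 1 by omega, Nat.fib_add]
    push_cast
    rw [show ((n:ℕ) - 1 + 1) = n by omega, hpred]
    try ring
  have s1 : (Nat.fib (2*n) : ℤ) = x * (y - x) + y * x := by
    have := hstep n; rw [show n + n = 2*n by ring] at this; rw [this]
  have s1' : (Nat.fib (2*n+1) : ℤ) = x^2 + y^2 := by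
    have := Nat.fib_add n n
    rw [show n + n + 1 = 2*n+1 by ring] at this
    rw [this]; push_cast; ring
  have s2 : (Nat.fib (3*n) : ℤ) = Nat.fib (2*n) * (y - x) + Nat.fib (2*n+1) * x := by
    have := hstep (2*n); rw [show 2*n + n = 3*n by ring] at this; exact this
  have s2' : (Nat.fib (3*n+1) : ℤ) = Nat.fib (2*n) * x + Nat.fib (2*n+1) * y := by
    have := Nat.fib_add (2*n) n
    rw [show 2*n + n + 1 = 3*n+1 by ring] at this
    rw [this]; push_cast; ring
  have s3 : (Nat.fib (4*n) : ℤ) = Nat.fib (3*n) * (y - x) + Nat.fib (3*n+1) * x := by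
    have := hstep (3*n); rw [show 3*n + n = 4*n by ring] at this; exact this
  have s3' : (Nat.fib (4*n+1) : ℤ) = Nat.fib (3*n) * x + Nat.fib (3*n+1) * y := by
    have := Nat.fib_add (3*n) n
    rw [show 3*n + n + 1 = 4*n+1 by ring] at this
    rw [this]; push_cast; ring
  have s4 : (Nat.fib (5*n) : ℤ) = Nat.fib (4*n) * (y - x) + Nat.fib (4*n+1) * x := by
    have := hstep (4*n); rw [show 4*n + n = 5*n by ring] at this; exact this
  have hc : y^2 - y * x - x^2 = (-1)^n := by
    have := cassini n; rw [← hx, ← hy] at this; linear_combination this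
  have hc2 : ((-1:ℤ)^n)^2 = 1 := by
    rw [← pow_mul, mul_comm, pow_mul]; norm_num
  rw [s4, s3, s3', s2, s2', s1, s1']
  linear_combination (25*x^3 + 5*x*((y^2 - y*x - x^2) + (-1)^n)) * hc + 5*x*hc2


/-- ℕ-version: for n ≥ 1, fib (5n) = 5 * fib n * W with ¬ 5 ∣ W. -/
lemma fib_five_mul_nat (n : ℕ) (hn : 1 ≤ n) :
    ∃ W : ℕ, Nat.fib (5*n) = 5 * Nat.fib n * W ∧ ¬ (5:ℕ) ∣ W := by
  have h := fib_five_mul n hn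
  set x : ℤ := (Nat.fib n : ℤ) with hx
  have hx1 : 1 ≤ x := by
    have h1 : 1 ≤ Nat.fib n := Nat.fib_pos.mpr (by omega)
    rw [hx]; exact_mod_cast h1
  set w : ℤ := 5 * x^4 + 5 * (-1)^n * x^2 + 1 with hw
  have hwpos : 0 < w := by
    rcases Int.even_or_odd n with he | ho
    · have : (-1:ℤ)^n = 1 := Even.neg_one_pow (by exact_mod_cast he)
      rw [hw, this]
      have hx2 : 1 ≤ x^2 := by nlinarith
      nlinarith [mul_nonneg (mul_nonneg (by norm_num : (0:ℤ) ≤ 5) (sq_nonneg x)) (sub_nonneg.mpr hx2)]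
    · have : (-1:ℤ)^n = -1 := Odd.neg_one_pow (by exact_mod_cast ho)
      rw [hw, this]
      have hx2 : 1 ≤ x^2 := by nlinarith
      nlinarith [mul_nonneg (mul_nonneg (by norm_num : (0:ℤ) ≤ 5) (sq_nonneg x)) (sub_nonneg.mpr hx2)]
  refine ⟨w.toNat, ?_, ?_⟩
  · have : (Nat.fib (5*n) : ℤ) = ((5 * Nat.fib n * w.toNat : ℕ) : ℤ) := by
      push_cast
      rw [Int.toNat_of_nonneg hwpos.le]
      linarith [h]
    exact_mod_cast this
  · intro hdvd
    have h5 : (5:ℤ) ∣ w := by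
      have := Int.natCast_dvd_natCast.mpr hdvd
      rwa [Int.toNat_of_nonneg hwpos.le] at this
      -- careful: cast of w.toNat
    have : (5:ℤ) ∣ 1 := by
      have : w - (5 * x^4 + 5 * (-1)^n * x^2) = 1 := by rw [hw]; ring
      have hd : (5:ℤ) ∣ (5 * x^4 + 5 * (-1)^n * x^2) := ⟨x^4 + (-1)^n * x^2, by ring⟩
      omega
    norm_num at this


lemma pow5_dvd_fib (b : ℕ) : ∀ ℓ, (5^b ∣ Nat.fib ℓ ↔ 5^b ∣ ℓ) := by
  induction b with
  | zero => simp
  | succ b ih =>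
    intro ℓ
    rcases Nat.eq_zero_or_pos ℓ with rfl | hl
    · simp
    constructor
    · intro h
      have h5 : 5 ∣ ℓ := (five_dvd_fib ℓ).mp (dvd_trans (dvd_pow_self 5 (by omega)) h)
      obtain ⟨n, rfl⟩ := h5
      have hn : 1 ≤ n := by omega
      obtain ⟨W, hW, hW5⟩ := fib_five_mul_nat n hn
      rw [hW] at h
      have h' : 5 * 5^b ∣ 5 * (Nat.fib n * W) := by
        rw [show 5 * (Nat.fib n * W) = 5 * Nat.fib n * W by ring]
        rw [show 5 * 5^b = 5^(b+1) by rw [pow_succ]; ring]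
        exact h
      have hcanc : 5^b ∣ Nat.fib n * W :=
        (Nat.mul_dvd_mul_iff_left (by norm_num : 0 < 5)).mp h'
      have hcop : Nat.Coprime (5^b) W :=
        Nat.Coprime.pow_left _ (((by norm_num : Nat.Prime 5).coprime_iff_not_dvd).mpr hW5)
      have hfn : 5^b ∣ Nat.fib n := hcop.dvd_of_dvd_mul_right hcanc
      have : 5^b ∣ n := (ih n).mp hfn
      rw [pow_succ, mul_comm (5^b) 5]
      exact mul_dvd_mul_left 5 this
    · intro h
      have h5 : 5 ∣ ℓ := dvd_trans (dvd_pow_self 5 (Nat.succ_ne_zero b)) h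
      obtain ⟨n, rfl⟩ := h5
      have hn : 1 ≤ n := by omega
      obtain ⟨W, hW, hW5⟩ := fib_five_mul_nat n hn
      rw [hW]
      have hbn : 5^b ∣ n := by
        have : 5 * 5^b ∣ 5 * n := by
          rw [show 5 * 5^b = 5^(b+1) from (pow_succ' 5 b).symm]; exact h
        exact (Nat.mul_dvd_mul_iff_left (by norm_num : 0 < 5)).mp this
      have : 5^b ∣ Nat.fib n := (ih n).mpr hbn
      calc (5:ℕ)^(b+1) = 5 * 5^b := pow_succ' 5 b
        _ ∣ 5 * Nat.fib n := mul_dvd_mul_left 5 this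
        _ ∣ 5 * Nat.fib n * W := dvd_mul_right _ _


lemma z_eq {N M : ℕ} (hM : 0 < M) (h : ∀ ℓ, N ∣ Nat.fib ℓ ↔ M ∣ ℓ) : z N = M := by
  unfold z
  apply le_antisymm
  · exact Nat.sInf_le ⟨hM, (h M).mpr dvd_rfl⟩
  · refine le_csInf ⟨M, ⟨hM, (h M).mpr dvd_rfl⟩⟩ ?_
    rintro ℓ ⟨hl, hdvd⟩
    exact Nat.le_of_dvd hl ((h ℓ).mp hdvd)

lemma cop_mul_dvd {u v m : ℕ} (h : Nat.Coprime u v) : u * v ∣ m ↔ u ∣ m ∧ v ∣ m :=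
  ⟨fun hh => ⟨(dvd_mul_right u v).trans hh, (dvd_mul_left v u).trans hh⟩,
   fun ⟨h1, h2⟩ => h.mul_dvd_of_dvd_of_dvd h1 h2⟩

lemma cop5 (m b : ℕ) (hm : Nat.Coprime m 5) : Nat.Coprime m (5^b) :=
  Nat.Coprime.pow_right b hm

-- z-values along the orbit
lemma z2 (b : ℕ) : z (2 * 5^b) = 3 * 5^b := by
  apply z_eq (by positivity)
  intro ℓ
  rw [cop_mul_dvd (cop5 2 b (by decide)), cop_mul_dvd (cop5 3 b (by decide)),
      two_dvd_fib, pow5_dvd_fib]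

lemma z3 (b : ℕ) : z (3 * 5^b) = 4 * 5^b := by
  apply z_eq (by positivity)
  intro ℓ
  rw [cop_mul_dvd (cop5 3 b (by decide)), cop_mul_dvd (cop5 4 b (by decide)),
      three_dvd_fib, pow5_dvd_fib]

lemma z4 (b : ℕ) : z (4 * 5^b) = 6 * 5^b := by
  apply z_eq (by positivity)
  intro ℓ
  rw [cop_mul_dvd (cop5 4 b (by decide)), cop_mul_dvd (cop5 6 b (by decide)),
      four_dvd_fib, pow5_dvd_fib]

lemma z6 (b : ℕ) : z (6 * 5^b) = 12 * 5^b := by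
  apply z_eq (by positivity)
  intro ℓ
  rw [show (6:ℕ) * 5^b = 2 * (3 * 5^b) by ring,
      cop_mul_dvd (Nat.Coprime.mul_right (by decide) (cop5 2 b (by decide))),
      cop_mul_dvd (cop5 3 b (by decide)),
      cop_mul_dvd (cop5 12 b (by decide)),
      two_dvd_fib, three_dvd_fib, pow5_dvd_fib]
  constructor
  · rintro ⟨h3, h4, h5⟩; exact ⟨by omega, h5⟩
  · rintro ⟨h12, h5⟩; exact ⟨by omega, by omega, h5⟩

lemma z24 (b : ℕ) : z (3 * 2^3 * 5^b) = 12 * 5^b := by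
  apply z_eq (by positivity)
  intro ℓ
  rw [show (3:ℕ) * 2^3 * 5^b = 8 * (3 * 5^b) by ring,
      cop_mul_dvd (Nat.Coprime.mul_right (by decide) (cop5 8 b (by decide))),
      cop_mul_dvd (cop5 3 b (by decide)),
      cop_mul_dvd (cop5 12 b (by decide)),
      eight_dvd_fib, three_dvd_fib, pow5_dvd_fib]
  constructor
  · rintro ⟨h6, h4, h5⟩; exact ⟨by omega, h5⟩
  · rintro ⟨h12, h5⟩; exact ⟨by omega, by omega, h5⟩

lemma cop2pow (e b : ℕ) : Nat.Coprime (2^e) (3 * 5^b) :=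
  Nat.Coprime.pow_left e (Nat.Coprime.mul_right (by decide) (cop5 2 b (by decide)))

lemma cop32pow (e b : ℕ) : Nat.Coprime (3 * 2^e) (5^b) :=
  Nat.Coprime.mul (cop5 3 b (by decide)) (Nat.Coprime.pow_left e (cop5 2 b (by decide)))

lemma zc (e b : ℕ) (he : 2 ≤ e) : z (3 * 2^(e+2) * 5^b) = 3 * 2^e * 5^b := by
  apply z_eq (by positivity)
  intro ℓ
  rw [show (3:ℕ) * 2^(e+2) * 5^b = 2^(e+2) * (3 * 5^b) by ring,
      cop_mul_dvd (cop2pow (e+2) b),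
      cop_mul_dvd (cop5 3 b (by decide)),
      cop_mul_dvd (cop32pow e b),
      pow2_dvd_fib e he, three_dvd_fib, pow5_dvd_fib]
  constructor
  · rintro ⟨h1, _, h5⟩; exact ⟨h1, h5⟩
  · rintro ⟨h1, h5⟩
    refine ⟨h1, ?_, h5⟩
    have h4 : (4:ℕ) ∣ 2^e := by
      have : (2:ℕ)^2 ∣ 2^e := pow_dvd_pow 2 he
      simpa using this
    exact dvd_trans h4 (dvd_trans (dvd_mul_left _ 3) h1)

lemma za0 (b : ℕ) : z (2^3 * 5^b) = 6 * 5^b := by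
  apply z_eq (by positivity)
  intro ℓ
  rw [show (2:ℕ)^3 * 5^b = 8 * 5^b by norm_num,
      cop_mul_dvd (cop5 8 b (by decide)), cop_mul_dvd (cop5 6 b (by decide)),
      eight_dvd_fib, pow5_dvd_fib]

lemma za1 (a b : ℕ) (ha : 1 ≤ a) : z (2^(a+3) * 5^b) = 3 * 2^(a+1) * 5^b := by
  apply z_eq (by positivity)
  intro ℓ
  rw [cop_mul_dvd (Nat.Coprime.pow_left (a+3) (cop5 2 b (by decide))),
      cop_mul_dvd (cop32pow (a+1) b),
      show a + 3 = (a+1) + 2 by ring,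
      pow2_dvd_fib (a+1) (by omega), pow5_dvd_fib]

lemma reach (b : ℕ) : ∀ c, 1 ≤ c → ∃ k, z^[k] (3 * 2^c * 5^b) = 12 * 5^b := by
  intro c
  induction c using Nat.strong_induction_on with
  | _ c ih =>
    intro hc
    match c with
    | 1 =>
      refine ⟨1, ?_⟩
      rw [Function.iterate_one, show (3:ℕ) * 2^1 * 5^b = 6 * 5^b by norm_num, z6]
    | 2 =>
      exact ⟨0, by norm_num⟩
    | 3 =>
      refine ⟨1, ?_⟩
      rw [Function.iterate_one, z24]
    | (c' + 4) =>
      obtain ⟨k, hk⟩ := ih (c' + 2) (by omega) (by omega)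
      refine ⟨k + 1, ?_⟩
      rw [Function.iterate_succ_apply, show c' + 4 = (c' + 2) + 2 by ring,
          zc (c'+2) b (by omega), hk]

theorem two_pow_five_pow_reaches (a b : ℕ) (ha : 0 < a) :
    ∃ k : ℕ, z^[k] (2 ^ a * 5 ^ b) = 12 * 5 ^ b := by
  match a with
  | 1 =>
    refine ⟨4, ?_⟩
    rw [show (4:ℕ) = 3 + 1 by rfl, Function.iterate_succ_apply,
        show (2:ℕ)^1 * 5^b = 2 * 5^b by norm_num, z2,
        Function.iterate_succ_apply, z3,
        Function.iterate_succ_apply, z4,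
        Function.iterate_one, z6]
  | 2 =>
    refine ⟨2, ?_⟩
    rw [show (2:ℕ) = 1 + 1 by rfl, Function.iterate_succ_apply,
        show (2:ℕ)^2 * 5^b = 4 * 5^b by norm_num, z4,
        Function.iterate_one, z6]
  | 3 =>
    obtain ⟨k, hk⟩ := reach b 1 (by omega)
    refine ⟨k + 1, ?_⟩
    rw [Function.iterate_succ_apply, za0 b,
        show (6:ℕ) * 5^b = 3 * 2^1 * 5^b by norm_num, hk]
  | (a' + 4) =>
    obtain ⟨k, hk⟩ := reach b (a' + 2) (by omega)
    refine ⟨k + 1, ?_⟩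
    rw [Function.iterate_succ_apply, show a' + 4 = (a' + 1) + 3 by ring,
        za1 (a'+1) b (by omega), show a' + 1 + 1 = a' + 2 by ring, hk]
end
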